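/- Let $(\Omega,\mathsf{A},\mu)$ be a probability space, $1 \le p < \infty$, and let $f_1,\dots,f_n$ be independent real-valued random variables in $L_p(\mu)$. Then there exist universal constants $0 < c \le C$ (depending only on $p$, not on $n$ or the $f_k$) such that $c\, M \le \big( \int_\Omega \big[ \sum_{k=1}^n |f_k(\omega)| \big]^p \, d\mu(\omega) \big)^{1/p} \le C\, M$, where $M = \max\Big\{ \sum_{k=1}^n \int_\Omega |f_k| \, d\mu, \; \big( \sum_{k=1}^n \int_\Omega |f_k|^p \, d\mu \big)^{1/p} \Big\}$. -/

import Mathlib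

open MeasureTheory ProbabilityTheory

lemma auxA {a b q : ℝ} (ha : 0 ≤ a) (hb : 0 ≤ b) (hq : 0 ≤ q) :
    (a + b) ^ q ≤ 2 ^ q * (a ^ q + b ^ q) := by
  have h1 : a + b ≤ 2 * max a b := by
    rcases le_total a b with h | h
    · simp [max_eq_right h]; linarith
    · simp [max_eq_left h]; linarith
  have h2 : (a + b) ^ q ≤ (2 * max a b) ^ q :=
    Real.rpow_le_rpow (by linarith) h1 hq
  have h3 : (2 * max a b) ^ q = 2 ^ q * (max a b) ^ q :=
    Real.mul_rpow (by norm_num) (le_max_iff.2 (Or.inl ha))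
  have h4 : (max a b) ^ q ≤ a ^ q + b ^ q := by
    rcases le_total a b with h | h
    · rw [max_eq_right h]
      nlinarith [Real.rpow_nonneg ha q]
    · rw [max_eq_left h]
      nlinarith [Real.rpow_nonneg hb q]
  calc (a + b) ^ q ≤ 2 ^ q * (max a b) ^ q := h2.trans_eq h3
    _ ≤ 2 ^ q * (a ^ q + b ^ q) := by
        have : (0:ℝ) < 2 ^ q := Real.rpow_pos_of_pos (by norm_num) q
        nlinarith

lemma auxB {x p : ℝ} (hx : 0 ≤ x) (hp : 1 ≤ p) : x * x ^ (p - 1) = x ^ p := by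
  rcases eq_or_lt_of_le hx with h | h
  · rw [← h]
    rw [Real.zero_rpow (by linarith : p ≠ 0), zero_mul]
  · nth_rewrite 1 [← Real.rpow_one x]
    rw [← Real.rpow_add h]
    ring_nf

lemma auxC {ι : Type*} (s : Finset ι) (x : ι → ℝ) (hx : ∀ i, 0 ≤ x i) {p : ℝ} (hp : 1 ≤ p) :
    ∑ i ∈ s, x i ^ p ≤ (∑ i ∈ s, x i) ^ p := by
  induction s using Finset.cons_induction with
  | empty => simp [Real.zero_rpow (by linarith : p ≠ 0)]
  | cons i s hi ih =>
    rw [Finset.sum_cons, Finset.sum_cons]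
    have hs : 0 ≤ ∑ j ∈ s, x j := Finset.sum_nonneg fun j _ => hx j
    calc x i ^ p + ∑ j ∈ s, x j ^ p ≤ x i ^ p + (∑ j ∈ s, x j) ^ p := by linarith
      _ ≤ (x i + ∑ j ∈ s, x j) ^ p := by
          have := NNReal.rpow_add_rpow_le_add (x i).toNNReal (∑ j ∈ s, x j).toNNReal hp
          have h2 := NNReal.coe_le_coe.2 this
          push_cast [NNReal.coe_rpow] at h2
          rw [Real.coe_toNNReal _ (hx i), Real.coe_toNNReal _ hs] at h2
          have hL : (0:ℝ) ≤ x i ^ p + (∑ j ∈ s, x j) ^ p :=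
            add_nonneg (Real.rpow_nonneg (hx i) p) (Real.rpow_nonneg hs p)
          have h3 := Real.rpow_le_rpow (Real.rpow_nonneg hL _) h2 (by linarith : (0:ℝ) ≤ p)
          rwa [← Real.rpow_mul hL, one_div, inv_mul_cancel₀ (by linarith : p ≠ 0),
            Real.rpow_one] at h3

lemma auxE {Ω : Type} [MeasurableSpace Ω] {μ : Measure Ω} [IsProbabilityMeasure μ]
    {X : Ω → ℝ} {p r : ℝ} (hr : 0 < r) (hrp : r ≤ p)
    (hX : MemLp X (ENNReal.ofReal p) μ) (hX0 : ∀ ω, 0 ≤ X ω) :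
    Integrable (fun ω => X ω ^ r) μ := by
  have hXr : MemLp X (ENNReal.ofReal r) μ :=
    hX.mono_exponent (ENNReal.ofReal_le_ofReal hrp)
  have h := hXr.integrable_norm_rpow (ENNReal.ofReal_pos.2 hr).ne' ENNReal.ofReal_ne_top
  simp only [ENNReal.toReal_ofReal hr.le, Real.norm_eq_abs] at h
  refine h.congr (Filter.Eventually.of_forall fun ω => ?_)
  simp only []
  rw [abs_of_nonneg (hX0 ω)]

lemma auxD {Ω : Type} [MeasurableSpace Ω] {μ : Measure Ω} [IsProbabilityMeasure μ]
    {X : Ω → ℝ} {p r : ℝ} (hr : 0 < r) (hrp : r ≤ p)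
    (hX : MemLp X (ENNReal.ofReal p) μ) (hX0 : ∀ ω, 0 ≤ X ω) :
    ∫ ω, X ω ^ r ∂μ ≤ (∫ ω, X ω ^ p ∂μ) ^ (r / p) := by
  have hp : 0 < p := lt_of_lt_of_le hr hrp
  have hXr : MemLp X (ENNReal.ofReal r) μ :=
    hX.mono_exponent (ENNReal.ofReal_le_ofReal hrp)
  have h1 : eLpNorm X (ENNReal.ofReal r) μ ≤ eLpNorm X (ENNReal.ofReal p) μ :=
    eLpNorm_le_eLpNorm_of_exponent_le (ENNReal.ofReal_le_ofReal hrp) hX.aestronglyMeasurable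
  rw [hXr.eLpNorm_eq_integral_rpow_norm (ENNReal.ofReal_pos.2 hr).ne' ENNReal.ofReal_ne_top,
    hX.eLpNorm_eq_integral_rpow_norm (ENNReal.ofReal_pos.2 hp).ne' ENNReal.ofReal_ne_top,
    ENNReal.toReal_ofReal hr.le, ENNReal.toReal_ofReal hp.le] at h1
  have habs : ∀ q : ℝ, (∫ a, ‖X a‖ ^ q ∂μ) = ∫ a, X a ^ q ∂μ := fun q =>
    integral_congr_ae (Filter.Eventually.of_forall fun ω => by
      simp only [Real.norm_eq_abs, abs_of_nonneg (hX0 ω)])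
  rw [habs, habs] at h1
  have hIr : 0 ≤ ∫ a, X a ^ r ∂μ :=
    integral_nonneg fun ω => Real.rpow_nonneg (hX0 ω) r
  have hIp : 0 ≤ ∫ a, X a ^ p ∂μ :=
    integral_nonneg fun ω => Real.rpow_nonneg (hX0 ω) p
  have h2 := ENNReal.ofReal_le_ofReal_iff (Real.rpow_nonneg hIp _) |>.1 h1
  have h3 := Real.rpow_le_rpow (Real.rpow_nonneg hIr _) h2 hr.le
  rwa [← Real.rpow_mul hIr, inv_mul_cancel₀ hr.ne', Real.rpow_one,
    ← Real.rpow_mul hIp, inv_mul_eq_div] at h3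

set_option maxHeartbeats 1000000

/-- Noncommutative paper, classical motivating fact (Σ_p): for independent real random
variables `f₁,…,f_n` on a probability space and `1 ≤ p < ∞`, the `L_p` norm of
`∑ |f_k|` is equivalent, with constants depending only on `p`, to
`max (∑ ∫|f_k|, (∑ ∫|f_k|^p)^{1/p})`. -/
theorem stmt_0 (p : ℝ) (hp : 1 ≤ p) :
    ∃ c C : ℝ, 0 < c ∧ c ≤ C ∧
      ∀ (Ω : Type) (_ : MeasurableSpace Ω) (μ : Measure Ω), IsProbabilityMeasure μ →
      ∀ (n : ℕ) (f : Fin n → Ω → ℝ),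
        (∀ k, Measurable (f k)) →
        iIndepFun f μ →
        (∀ k, MemLp (f k) (ENNReal.ofReal p) μ) →
        c * max (∑ k, ∫ ω, |f k ω| ∂μ) ((∑ k, ∫ ω, |f k ω| ^ p ∂μ) ^ (1 / p))
            ≤ (∫ ω, (∑ k, |f k ω|) ^ p ∂μ) ^ (1 / p) ∧
          (∫ ω, (∑ k, |f k ω|) ^ p ∂μ) ^ (1 / p)
            ≤ C * max (∑ k, ∫ ω, |f k ω| ∂μ) ((∑ k, ∫ ω, |f k ω| ^ p ∂μ) ^ (1 / p)) := by
  have hp0 : 0 < p := lt_of_lt_of_le one_pos hp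
  have h2p1 : (1:ℝ) ≤ 2 ^ p := by
    calc (1:ℝ) = 2 ^ (0:ℝ) := (Real.rpow_zero 2).symm
      _ ≤ 2 ^ p := Real.rpow_le_rpow_of_exponent_le one_le_two hp0.le
  refine ⟨1, 2 ^ p, one_pos, h2p1, ?_⟩
  intro Ω mΩ μ hμ n f hmeas hindep hmem
  have hX0 : ∀ (k : Fin n) ω, (0:ℝ) ≤ |f k ω| := fun k ω => abs_nonneg _
  have hXmem : ∀ k, MemLp (fun ω => |f k ω|) (ENNReal.ofReal p) μ := fun k => by
    simpa [Real.norm_eq_abs] using (hmem k).norm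
  have hXint : ∀ k, Integrable (fun ω => |f k ω|) μ := fun k =>
    (hXmem k).integrable (ENNReal.one_le_ofReal.2 hp)
  have hS0 : ∀ ω, (0:ℝ) ≤ ∑ k, |f k ω| := fun ω => Finset.sum_nonneg fun k _ => abs_nonneg _
  have hSmem : MemLp (fun ω => ∑ k, |f k ω|) (ENNReal.ofReal p) μ :=
    memLp_finsetSum _ fun k _ => hXmem k
  have hSpInt : Integrable (fun ω => (∑ k, |f k ω|) ^ p) μ := auxE hp0 le_rfl hSmem hS0
  have hXpInt : ∀ k, Integrable (fun ω => |f k ω| ^ p) μ := fun k =>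
    auxE hp0 le_rfl (hXmem k) (hX0 k)
  have hIp0 : 0 ≤ ∫ ω, (∑ k, |f k ω|) ^ p ∂μ :=
    integral_nonneg fun ω => Real.rpow_nonneg (hS0 ω) p
  have ha0 : 0 ≤ ∑ k, ∫ ω, |f k ω| ∂μ :=
    Finset.sum_nonneg fun k _ => integral_nonneg fun ω => abs_nonneg _
  have hBp0 : 0 ≤ ∑ k, ∫ ω, |f k ω| ^ p ∂μ :=
    Finset.sum_nonneg fun k _ => integral_nonneg fun ω => Real.rpow_nonneg (abs_nonneg _) p
  -- lower bound
  have hJ1 : ∫ ω, (∑ k, |f k ω|) ^ (1:ℝ) ∂μ ≤ (∫ ω, (∑ k, |f k ω|) ^ p ∂μ) ^ (1 / p) :=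
    auxD one_pos hp hSmem hS0
  simp only [Real.rpow_one] at hJ1
  have haA : (∑ k, ∫ ω, |f k ω| ∂μ) ≤ (∫ ω, (∑ k, |f k ω|) ^ p ∂μ) ^ (1 / p) := by
    rw [← integral_finset_sum _ fun k _ => hXint k]
    exact hJ1
  have hBpA : (∑ k, ∫ ω, |f k ω| ^ p ∂μ) ≤ ∫ ω, (∑ k, |f k ω|) ^ p ∂μ := by
    rw [← integral_finset_sum _ fun k _ => hXpInt k]
    refine integral_mono (integrable_finset_sum _ fun k _ => hXpInt k) hSpInt fun ω => ?_
    exact auxC Finset.univ (fun k => |f k ω|) (fun k => abs_nonneg _) hp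
  have hbA : (∑ k, ∫ ω, |f k ω| ^ p ∂μ) ^ (1 / p) ≤ (∫ ω, (∑ k, |f k ω|) ^ p ∂μ) ^ (1 / p) :=
    Real.rpow_le_rpow hBp0 hBpA (by positivity)
  constructor
  · rw [one_mul]
    exact max_le haA hbA
  -- upper bound
  rcases eq_or_lt_of_le hp with hp1 | hp1
  · -- p = 1
    rw [← hp1]
    norm_num [Real.rpow_one]
    rw [← integral_finset_sum _ fun k _ => hXint k] at haA ⊢
    have : (0:ℝ) ≤ ∫ ω, ∑ k, |f k ω| ∂μ := integral_nonneg hS0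
    have hle : ∫ ω, ∑ k, |f k ω| ∂μ ≤
        max (∑ k, ∫ ω, |f k ω| ∂μ) (∑ k, ∫ ω, |f k ω| ∂μ) := by
      rw [max_self, integral_finset_sum _ fun k _ => hXint k]
    have hmax0 : (0:ℝ) ≤ max (∑ k, ∫ ω, |f k ω| ∂μ) (∑ k, ∫ ω, |f k ω| ∂μ) :=
      le_trans this hle
    linarith
  -- p > 1
  have hq : (0:ℝ) < p - 1 := by linarith
  have hT0 : ∀ (k : Fin n) ω, (0:ℝ) ≤ ∑ j ∈ Finset.univ.erase k, |f j ω| :=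
    fun k ω => Finset.sum_nonneg fun j _ => abs_nonneg _
  have hTmem : ∀ k, MemLp (fun ω => ∑ j ∈ Finset.univ.erase k, |f j ω|)
      (ENNReal.ofReal p) μ := fun k => memLp_finsetSum _ fun j _ => hXmem j
  have hTqInt : ∀ k, Integrable
      (fun ω => (∑ j ∈ Finset.univ.erase k, |f j ω|) ^ (p - 1)) μ :=
    fun k => auxE hq (by linarith) (hTmem k) (hT0 k)
  have hIndep : ∀ k, IndepFun (fun ω => |f k ω|)
      (fun ω => (∑ j ∈ Finset.univ.erase k, |f j ω|) ^ (p - 1)) μ := by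
    intro k
    have hXindep : iIndepFun (fun i => (fun x : ℝ => |x|) ∘ f i) μ :=
      hindep.comp _ (fun i => measurable_abs)
    have h1 : IndepFun (∑ j ∈ Finset.univ.erase k, (fun x : ℝ => |x|) ∘ f j)
        ((fun x : ℝ => |x|) ∘ f k) μ :=
      hXindep.indepFun_finsetSum_of_notMem (fun i => (hmeas i).abs)
        (Finset.notMem_erase k _)
    have h2 := (h1.comp (show Measurable fun x : ℝ => x ^ (p - 1) by fun_prop)
      measurable_id).symm
    have e1 : (fun ω => (∑ j ∈ Finset.univ.erase k, |f j ω|) ^ (p - 1)) =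
        (fun x : ℝ => x ^ (p - 1)) ∘ (∑ j ∈ Finset.univ.erase k, (fun x : ℝ => |x|) ∘ f j) := by
      funext ω; simp [Finset.sum_apply]
    have e2 : (fun ω => |f k ω|) = id ∘ ((fun x : ℝ => |x|) ∘ f k) := rfl
    rw [e1, e2]
    exact h2
  have hprodInt : ∀ k, Integrable
      (fun ω => |f k ω| * (∑ j ∈ Finset.univ.erase k, |f j ω|) ^ (p - 1)) μ :=
    fun k => (hIndep k).integrable_mul (hXint k) (hTqInt k)
  have hintEq : ∀ k, ∫ ω, |f k ω| * (∑ j ∈ Finset.univ.erase k, |f j ω|) ^ (p - 1) ∂μ =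
      (∫ ω, |f k ω| ∂μ) * ∫ ω, (∑ j ∈ Finset.univ.erase k, |f j ω|) ^ (p - 1) ∂μ :=
    fun k => (hIndep k).integral_fun_mul_eq_mul_integral (hXint k).aestronglyMeasurable (hTqInt k).aestronglyMeasurable
  have hTqLe : ∀ k, ∫ ω, (∑ j ∈ Finset.univ.erase k, |f j ω|) ^ (p - 1) ∂μ ≤
      (∫ ω, (∑ k, |f k ω|) ^ p ∂μ) ^ ((p - 1) / p) := by
    intro k
    refine (auxD hq (by linarith) (hTmem k) (hT0 k)).trans ?_
    refine Real.rpow_le_rpow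
      (integral_nonneg fun ω => Real.rpow_nonneg (hT0 k ω) p) ?_ (by positivity)
    refine integral_mono (auxE hp0 le_rfl (hTmem k) (hT0 k)) hSpInt fun ω => ?_
    refine Real.rpow_le_rpow (hT0 k ω) ?_ hp0.le
    exact Finset.sum_le_sum_of_subset_of_nonneg (Finset.erase_subset _ _)
      fun j _ _ => abs_nonneg _
  -- pointwise key inequality
  have key : ∀ ω, (∑ k, |f k ω|) ^ p ≤ 2 ^ (p - 1) *
      ∑ k, (|f k ω| * (∑ j ∈ Finset.univ.erase k, |f j ω|) ^ (p - 1) + |f k ω| ^ p) := by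
    intro ω
    have hS : ∀ k : Fin n, |f k ω| + ∑ j ∈ Finset.univ.erase k, |f j ω| = ∑ j, |f j ω| :=
      fun k => Finset.add_sum_erase Finset.univ (fun j => |f j ω|) (Finset.mem_univ k)
    have h1 : (∑ k, |f k ω|) ^ p = ∑ k, |f k ω| * (∑ j, |f j ω|) ^ (p - 1) := by
      rw [← Finset.sum_mul, auxB (hS0 ω) hp]
    rw [h1, Finset.mul_sum]
    refine Finset.sum_le_sum fun k _ => ?_
    have hT0' : (0:ℝ) ≤ ∑ j ∈ Finset.univ.erase k, |f j ω| := hT0 k ω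
    have h2 : (∑ j, |f j ω|) ^ (p - 1) ≤
        2 ^ (p - 1) * (|f k ω| ^ (p - 1) + (∑ j ∈ Finset.univ.erase k, |f j ω|) ^ (p - 1)) := by
      rw [← hS k]
      exact auxA (abs_nonneg _) hT0' (by linarith)
    calc |f k ω| * (∑ j, |f j ω|) ^ (p - 1)
        ≤ |f k ω| * (2 ^ (p - 1) *
            (|f k ω| ^ (p - 1) + (∑ j ∈ Finset.univ.erase k, |f j ω|) ^ (p - 1))) :=
          mul_le_mul_of_nonneg_left h2 (abs_nonneg _)
      _ = 2 ^ (p - 1) * (|f k ω| * (∑ j ∈ Finset.univ.erase k, |f j ω|) ^ (p - 1)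
            + |f k ω| * |f k ω| ^ (p - 1)) := by ring
      _ = 2 ^ (p - 1) * (|f k ω| * (∑ j ∈ Finset.univ.erase k, |f j ω|) ^ (p - 1)
            + |f k ω| ^ p) := by rw [auxB (abs_nonneg _) hp]
  -- integrate the key inequality
  have hsumInt : ∀ k : Fin n, Integrable
      (fun ω => |f k ω| * (∑ j ∈ Finset.univ.erase k, |f j ω|) ^ (p - 1) + |f k ω| ^ p) μ :=
    fun k => (hprodInt k).add (hXpInt k)
  have hRHSInt : Integrable (fun ω => 2 ^ (p - 1) *
      ∑ k, (|f k ω| * (∑ j ∈ Finset.univ.erase k, |f j ω|) ^ (p - 1) + |f k ω| ^ p)) μ :=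
    (integrable_finset_sum _ fun k _ => hsumInt k).const_mul _
  have hmain : ∫ ω, (∑ k, |f k ω|) ^ p ∂μ ≤ 2 ^ (p - 1) *
      ((∑ k, ∫ ω, |f k ω| ∂μ) * (∫ ω, (∑ k, |f k ω|) ^ p ∂μ) ^ ((p - 1) / p)
        + ∑ k, ∫ ω, |f k ω| ^ p ∂μ) := by
    have step1 : ∫ ω, (∑ k, |f k ω|) ^ p ∂μ ≤ ∫ ω, 2 ^ (p - 1) *
        ∑ k, (|f k ω| * (∑ j ∈ Finset.univ.erase k, |f j ω|) ^ (p - 1) + |f k ω| ^ p) ∂μ :=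
      integral_mono hSpInt hRHSInt key
    have step2 : ∫ ω, 2 ^ (p - 1) *
        ∑ k, (|f k ω| * (∑ j ∈ Finset.univ.erase k, |f j ω|) ^ (p - 1) + |f k ω| ^ p) ∂μ =
        2 ^ (p - 1) * ∑ k,
          ((∫ ω, |f k ω| ∂μ) * ∫ ω, (∑ j ∈ Finset.univ.erase k, |f j ω|) ^ (p - 1) ∂μ
            + ∫ ω, |f k ω| ^ p ∂μ) := by
      rw [integral_const_mul, integral_finset_sum _ fun k _ => hsumInt k]
      congr 1
      refine Finset.sum_congr rfl fun k _ => ?_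
      rw [integral_add (hprodInt k) (hXpInt k), hintEq k]
    have step3 : ∑ k,
        ((∫ ω, |f k ω| ∂μ) * ∫ ω, (∑ j ∈ Finset.univ.erase k, |f j ω|) ^ (p - 1) ∂μ
          + ∫ ω, |f k ω| ^ p ∂μ) ≤
        (∑ k, ∫ ω, |f k ω| ∂μ) * (∫ ω, (∑ k, |f k ω|) ^ p ∂μ) ^ ((p - 1) / p)
          + ∑ k, ∫ ω, |f k ω| ^ p ∂μ := by
      rw [Finset.sum_add_distrib, Finset.sum_mul]
      refine add_le_add (Finset.sum_le_sum fun k _ => ?_) le_rfl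
      exact mul_le_mul_of_nonneg_left (hTqLe k)
        (integral_nonneg fun ω => abs_nonneg _)
    calc ∫ ω, (∑ k, |f k ω|) ^ p ∂μ ≤ _ := step1
      _ = _ := step2
      _ ≤ _ := by
          have h2q : (0:ℝ) < 2 ^ (p - 1) := Real.rpow_pos_of_pos two_pos _
          exact mul_le_mul_of_nonneg_left step3 h2q.le
  -- final algebra
  set a := ∑ k, ∫ ω, |f k ω| ∂μ with ha_def
  set Bp := ∑ k, ∫ ω, |f k ω| ^ p ∂μ with hBp_def
  set Ip := ∫ ω, (∑ k, |f k ω|) ^ p ∂μ with hIp_def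
  set M := max a (Bp ^ (1 / p)) with hM_def
  set K := (2:ℝ) ^ (p - 1) with hK_def
  have hK0 : (0:ℝ) < K := Real.rpow_pos_of_pos two_pos _
  have hM0 : 0 ≤ M := le_trans ha0 (le_max_left _ _)
  have haM : a ≤ M := le_max_left _ _
  have hBpM : Bp ≤ M ^ p := by
    have h1 : Bp ^ (1 / p) ≤ M := le_max_right _ _
    have h2 := Real.rpow_le_rpow (Real.rpow_nonneg hBp0 _) h1 hp0.le
    rwa [← Real.rpow_mul hBp0, one_div, inv_mul_cancel₀ hp0.ne', Real.rpow_one] at h2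
  set A := Ip ^ (1 / p) with hA_def
  have hA0 : 0 ≤ A := Real.rpow_nonneg hIp0 _
  have hAp : A ^ p = Ip := by
    rw [hA_def, ← Real.rpow_mul hIp0, one_div, inv_mul_cancel₀ hp0.ne', Real.rpow_one]
  have hAq : A ^ (p - 1) = Ip ^ ((p - 1) / p) := by
    rw [hA_def, ← Real.rpow_mul hIp0, one_div, inv_mul_eq_div]
  have hAq0 : 0 ≤ A ^ (p - 1) := Real.rpow_nonneg hA0 _
  have h2p : (2:ℝ) ^ p = 2 * K := by
    rw [hK_def, show p = 1 + (p - 1) by ring, Real.rpow_add two_pos, Real.rpow_one]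
    ring_nf
  have hineq : A ^ p ≤ K * (M * A ^ (p - 1) + M ^ p) := by
    rw [hAp, hAq]
    refine hmain.trans (mul_le_mul_of_nonneg_left ?_ hK0.le)
    have h1 : (0:ℝ) ≤ Ip ^ ((p - 1) / p) := Real.rpow_nonneg hIp0 _
    nlinarith
  by_contra hcon
  push_neg at hcon
  rw [h2p] at hcon
  have hApos : 0 < A :=
    lt_of_le_of_lt (mul_nonneg (mul_nonneg (by norm_num) hK0.le) hM0) hcon
  have hAqpos : 0 < A ^ (p - 1) := Real.rpow_pos_of_pos hApos _
  have hApmul : A ^ p = A * A ^ (p - 1) := (auxB hA0 hp).symm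
  have h5 : 2 * K * M * A ^ (p - 1) < A * A ^ (p - 1) :=
    mul_lt_mul_of_pos_right hcon hAqpos
  have h6 : (2 * K * M) ^ p < A ^ p :=
    Real.rpow_lt_rpow (by positivity) hcon hp0
  have h7 : (2 * K * M) ^ p = (2 * K) ^ p * M ^ p :=
    Real.mul_rpow (by positivity) hM0
  have h8 : 2 * K ≤ (2 * K) ^ p := by
    nth_rewrite 1 [← Real.rpow_one (2 * K)]
    refine Real.rpow_le_rpow_of_exponent_le ?_ hp
    rw [← h2p]; exact h2p1
  have h9 : (2 * K) * M ^ p ≤ (2 * K) ^ p * M ^ p :=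
    mul_le_mul_of_nonneg_right h8 (Real.rpow_nonneg hM0 _)
  nlinarith [Real.rpow_nonneg hM0 p]
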